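/- Let H = ⟨a, b, c | a^{2^n} = 1, b^{2^m} = a^{2^m}, c^{2^ℓ} = 1, [b,a] = c, [c,a] = c^{-2}, [c,b] = c^{-2}⟩ with n ≥ m > ℓ ≥ 2, and let F be a field of characteristic 2. Set y = b + a + 1 ∈ FH. Then y^{2^m} = 1. -/

import Mathlib

open FreeGroup in
/-- Relators of H = ⟨a,b,c | a^{2^n}=1, b^{2^m}=a^{2^m}, c^{2^ℓ}=1, [b,a]=c, [c,a]=c⁻²,
[c,b]=c⁻²⟩ (convention [b,a] = b⁻¹a⁻¹ba; generators 0 ↦ a, 1 ↦ b, 2 ↦ c). -/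
def relsH2 (n m ℓ : ℕ) : Set (FreeGroup (Fin 3)) :=
  { (of 0) ^ (2 ^ n), (of 1) ^ (2 ^ m) * ((of 0) ^ (2 ^ m))⁻¹, (of 2) ^ (2 ^ ℓ),
    (of 1)⁻¹ * (of 0)⁻¹ * of 1 * of 0 * (of 2)⁻¹,
    (of 2)⁻¹ * (of 0)⁻¹ * of 2 * of 0 * (of 2) ^ 2,
    (of 2)⁻¹ * (of 1)⁻¹ * of 2 * of 1 * (of 2) ^ 2 }

abbrev H2 (n m ℓ : ℕ) := PresentedGroup (relsH2 n m ℓ)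

lemma mk_of' {α : Type*} (rels : Set (FreeGroup α)) (x : α) :
    PresentedGroup.mk rels (FreeGroup.of x) = PresentedGroup.of x := rfl

lemma rel_eq_one {α : Type*} {rels : Set (FreeGroup α)} {r : FreeGroup α} (h : r ∈ rels) :
    PresentedGroup.mk rels r = 1 :=
  (QuotientGroup.eq_one_iff r).mpr (Subgroup.subset_normalClosure h)

section grp
variable (n m ℓ : ℕ)
local notation "a" => (PresentedGroup.of (rels := relsH2 n m ℓ) 0)
local notation "b" => (PresentedGroup.of (rels := relsH2 n m ℓ) 1)
local notation "c" => (PresentedGroup.of (rels := relsH2 n m ℓ) 2)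

lemma h2_bm : b ^ 2 ^ m = a ^ 2 ^ m := by
  have h := rel_eq_one (rels := relsH2 n m ℓ)
    (r := (FreeGroup.of 1) ^ (2 ^ m) * ((FreeGroup.of 0) ^ (2 ^ m))⁻¹)
    (by simp [relsH2])
  simp only [map_mul, map_pow, map_inv] at h
  rwa [mul_inv_eq_one] at h

lemma h2_cl : c ^ 2 ^ ℓ = 1 := by
  have h := rel_eq_one (rels := relsH2 n m ℓ) (r := (FreeGroup.of 2) ^ (2 ^ ℓ))
    (by simp [relsH2])
  simpa [mk_of'] using h

lemma h2_ba : b * a = a * b * c := by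
  have h := rel_eq_one (rels := relsH2 n m ℓ)
    (r := (FreeGroup.of 1)⁻¹ * (FreeGroup.of 0)⁻¹ * FreeGroup.of 1 * FreeGroup.of 0 *
      (FreeGroup.of 2)⁻¹) (by simp [relsH2])
  simp only [map_mul, map_inv] at h
  have h2 := congrArg (fun x => a * b * (x * c)) h
  simpa [mul_assoc, mk_of'] using h2

lemma h2_ca : c * a = a * c⁻¹ := by
  have h := rel_eq_one (rels := relsH2 n m ℓ)
    (r := (FreeGroup.of 2)⁻¹ * (FreeGroup.of 0)⁻¹ * FreeGroup.of 2 * FreeGroup.of 0 *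
      (FreeGroup.of 2) ^ 2) (by simp [relsH2])
  simp only [map_mul, map_inv, map_pow] at h
  have h2 := congrArg (fun x => a * c * (x * (c⁻¹ * c⁻¹))) h
  simpa [mul_assoc, pow_two, mk_of'] using h2

lemma h2_cb : c * b = b * c⁻¹ := by
  have h := rel_eq_one (rels := relsH2 n m ℓ)
    (r := (FreeGroup.of 2)⁻¹ * (FreeGroup.of 1)⁻¹ * FreeGroup.of 2 * FreeGroup.of 1 *
      (FreeGroup.of 2) ^ 2) (by simp [relsH2])
  simp only [map_mul, map_inv, map_pow] at h
  have h2 := congrArg (fun x => b * c * (x * (c⁻¹ * c⁻¹))) h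
  simpa [mul_assoc, pow_two, mk_of'] using h2

end grp

section grp2
variable (n m ℓ : ℕ)
local notation "a" => (PresentedGroup.of (rels := relsH2 n m ℓ) 0)
local notation "b" => (PresentedGroup.of (rels := relsH2 n m ℓ) 1)
local notation "c" => (PresentedGroup.of (rels := relsH2 n m ℓ) 2)

lemma h2_cinva : c⁻¹ * a = a * c := by
  have h2 := congrArg (fun x => c⁻¹ * x * c) (h2_ca n m ℓ)
  simpa [mul_assoc] using h2.symm

lemma h2_cinvb : c⁻¹ * b = b * c := by
  have h2 := congrArg (fun x => c⁻¹ * x * c) (h2_cb n m ℓ)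
  simpa [mul_assoc] using h2.symm

lemma h2_a2b : Commute (a * a) b := by
  symm
  show b * (a * a) = (a * a) * b
  calc b * (a * a) = (b * a) * a := by rw [mul_assoc]
    _ = (a * b * c) * a := by rw [h2_ba]
    _ = (a * b) * (c * a) := by simp [mul_assoc]
    _ = (a * b) * (a * c⁻¹) := by rw [h2_ca]
    _ = (a * (b * a)) * c⁻¹ := by simp [mul_assoc]
    _ = (a * (a * b * c)) * c⁻¹ := by rw [h2_ba]
    _ = (a * a) * b := by simp [mul_assoc]

lemma h2_b2a : Commute (b * b) a := by
  show (b * b) * a = a * (b * b)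
  calc (b * b) * a = b * (b * a) := by rw [mul_assoc]
    _ = b * (a * b * c) := by rw [h2_ba]
    _ = (b * a) * (b * c) := by simp [mul_assoc]
    _ = (a * b * c) * (b * c) := by rw [h2_ba]
    _ = (a * b) * (c * b) * c := by simp [mul_assoc]
    _ = (a * b) * (b * c⁻¹) * c := by rw [h2_cb]
    _ = a * (b * b) := by simp [mul_assoc]

lemma h2_a2c : Commute (a * a) c := by
  symm
  show c * (a * a) = (a * a) * c
  calc c * (a * a) = (c * a) * a := by rw [mul_assoc]
    _ = (a * c⁻¹) * a := by rw [h2_ca]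
    _ = a * (c⁻¹ * a) := by rw [mul_assoc]
    _ = a * (a * c) := by rw [h2_cinva]
    _ = (a * a) * c := by rw [mul_assoc]

lemma h2_b2c : Commute (b * b) c := by
  symm
  show c * (b * b) = (b * b) * c
  calc c * (b * b) = (c * b) * b := by rw [mul_assoc]
    _ = (b * c⁻¹) * b := by rw [h2_cb]
    _ = b * (c⁻¹ * b) := by rw [mul_assoc]
    _ = b * (b * c) := by rw [h2_cinvb]
    _ = (b * b) * c := by rw [mul_assoc]

lemma h2_abc : Commute (a * b) c := by
  symm
  show c * (a * b) = (a * b) * c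
  calc c * (a * b) = (c * a) * b := by rw [mul_assoc]
    _ = (a * c⁻¹) * b := by rw [h2_ca]
    _ = a * (c⁻¹ * b) := by rw [mul_assoc]
    _ = a * (b * c) := by rw [h2_cinvb]
    _ = (a * b) * c := by rw [mul_assoc]

end grp2

/-- For n ≥ m > ℓ ≥ 2 and F of characteristic 2, the unit
y = b + a + 1 of FH satisfies y^{2^m} = 1. -/
theorem stmt9 (n m ℓ : ℕ) (hℓ : 2 ≤ ℓ) (hmℓ : ℓ < m) (hnm : m ≤ n)
    (F : Type*) [Field F] [CharP F 2] :
    (MonoidAlgebra.of F (H2 n m ℓ) (PresentedGroup.of 1) +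
      MonoidAlgebra.of F (H2 n m ℓ) (PresentedGroup.of 0) + 1) ^ (2 ^ m) = 1 := by
  haveI : Fact (Nat.Prime 2) := ⟨Nat.prime_two⟩
  haveI : CharP (MonoidAlgebra F (H2 n m ℓ)) 2 := charP_of_injective_algebraMap' F 2
  set φ := MonoidAlgebra.of F (H2 n m ℓ) with hφ
  set a : H2 n m ℓ := PresentedGroup.of 0 with hha
  set b : H2 n m ℓ := PresentedGroup.of 1 with hhb
  set c : H2 n m ℓ := PresentedGroup.of 2 with hhc
  obtain ⟨k, rfl⟩ : ∃ k, m = k + 1 := ⟨m - 1, by omega⟩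
  have hlk : ℓ ≤ k := by omega
  -- algebra-level commutation facts
  have ca2b : Commute (φ a * φ a) (φ b) := by
    have := (h2_a2b n (k+1) ℓ).map φ; rwa [map_mul] at this
  have cb2a : Commute (φ b * φ b) (φ a) := by
    have := (h2_b2a n (k+1) ℓ).map φ; rwa [map_mul] at this
  have ca2c : Commute (φ a * φ a) (φ c) := by
    have := (h2_a2c n (k+1) ℓ).map φ; rwa [map_mul] at this
  have cb2c : Commute (φ b * φ b) (φ c) := by
    have := (h2_b2c n (k+1) ℓ).map φ; rwa [map_mul] at this
  have cabc : Commute (φ a * φ b) (φ c) := by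
    have := (h2_abc n (k+1) ℓ).map φ; rwa [map_mul] at this
  have cab1c : Commute (φ a * φ b) (1 + φ c) := (Commute.one_right _).add_right cabc
  -- y^2
  have hba' : φ b * φ a = φ a * φ b * φ c := by
    rw [← map_mul, ← map_mul, ← map_mul, h2_ba]
  have hcross : φ b * φ a + φ a * φ b = φ a * φ b * (1 + φ c) := by
    rw [hba', mul_add, mul_one]; exact add_comm _ _
  have hy2 : (φ b + φ a + 1) ^ 2 =
      (φ a * φ a + φ b * φ b + 1) + φ a * φ b * (1 + φ c) := by
    have expand : (φ b + φ a + 1) ^ 2 =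
        φ a * φ a + φ b * φ b + 1 + (φ b * φ a + φ a * φ b) + (φ b + φ b) + (φ a + φ a) := by
      noncomm_ring
    rw [expand, CharTwo.add_self_eq_zero, CharTwo.add_self_eq_zero, add_zero, add_zero, hcross]
  -- commute for the big split
  have cuv : Commute (φ a * φ a) (φ b * φ b) := ca2b.mul_right ca2b
  have cu_w : Commute (φ a * φ a) (φ a * φ b * (1 + φ c)) :=
    (((Commute.refl (φ a)).mul_left (Commute.refl (φ a))).mul_right ca2b).mul_right
      ((Commute.one_right _).add_right ca2c)
  have cv_w : Commute (φ b * φ b) (φ a * φ b * (1 + φ c)) :=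
    (cb2a.mul_right ((Commute.refl (φ b)).mul_left (Commute.refl (φ b)))).mul_right
      ((Commute.one_right _).add_right cb2c)
  have csum_w : Commute (φ a * φ a + φ b * φ b + 1)
      (φ a * φ b * (1 + φ c)) := (cu_w.add_left cv_w).add_left (Commute.one_left _)
  -- the power computation
  have h2pow : (2:ℕ) ^ (k+1) = 2 * 2 ^ k := by ring
  rw [h2pow, pow_mul, hy2,
    add_pow_char_pow_of_commute 2 k csum_w,
    add_pow_char_pow_of_commute 2 k (Commute.one_right (φ a * φ a + φ b * φ b)),
    add_pow_char_pow_of_commute 2 k cuv, one_pow,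
    cab1c.mul_pow]
  -- (1 + φ c)^(2^k) = 0
  have hc0 : (1 + φ c) ^ 2 ^ k = 0 := by
    rw [add_pow_char_pow_of_commute 2 k (Commute.one_left (φ c)), one_pow, ← map_pow]
    have : c ^ 2 ^ k = 1 := by
      have : (2:ℕ) ^ k = 2 ^ ℓ * 2 ^ (k - ℓ) := by
        rw [← pow_add, Nat.add_sub_cancel' hlk]
      rw [this, pow_mul, h2_cl, one_pow]
    rw [this, map_one, CharTwo.add_self_eq_zero]
  -- (φa*φa)^(2^k) + (φb*φb)^(2^k) = 0
  have hab0 : (φ a * φ a) ^ 2 ^ k + (φ b * φ b) ^ 2 ^ k = 0 := by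
    have ha : (φ a * φ a) ^ 2 ^ k = φ (a ^ 2 ^ (k+1)) := by
      rw [← map_mul, ← map_pow, ← sq, ← pow_mul, ← h2pow]
    have hb : (φ b * φ b) ^ 2 ^ k = φ (a ^ 2 ^ (k+1)) := by
      rw [← map_mul, ← map_pow, ← sq, ← pow_mul, ← h2pow, h2_bm]
    rw [ha, hb, CharTwo.add_self_eq_zero]
  rw [hab0, hc0, mul_zero, add_zero, zero_add]
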